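/- Let q be a prime power, n ≥ 2, ζ a primitive element of F_{q^n}, F : F_{q^n} → F_{q^n} a function, and f : Z/(q^n−1)Z → F_{q^n} defined by f(k) = F(ζ^k). Let r be the least period of F_ζ[f]. If the support of F contains an element of degree n over F_q, then r does not divide q^d − 1 for any proper positive divisor d of n. -/

import Mathlib

/-- The discrete Fourier transform based on `ζ`: `F_ζ[f](i) = ∑_j f(j) ζ^{ij}`. -/
def dft {K : Type*} [CommRing K] (N : ℕ) (ζ : K) (f : ZMod N → K) (i : ZMod N) : K :=
  ∑ j ∈ Finset.range N, f (j : ZMod N) * ζ ^ (i.val * j)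

/-- `f : ℤ/Nℤ → α` is `r`-periodic if `f(i + r) = f(i)` for all `i`. -/
def IsPeriodicZMod {N : ℕ} {α : Type*} (f : ZMod N → α) (r : ℕ) : Prop :=
  ∀ i : ZMod N, f (i + (r : ZMod N)) = f i

/-- The least period of `f : ℤ/Nℤ → α`. -/
noncomputable def leastPeriod {N : ℕ} {α : Type*} (f : ZMod N → α) : ℕ :=
  sInf {r : ℕ | 0 < r ∧ IsPeriodicZMod f r}

lemma IsPeriodicZMod.mul_nat {N : ℕ} {α : Type*} {f : ZMod N → α} {r : ℕ}
    (h : IsPeriodicZMod f r) (m : ℕ) : IsPeriodicZMod f (r * m) := by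
  induction m with
  | zero => intro i; simp
  | succ m ih =>
    intro i
    have hc : ((r * (m + 1) : ℕ) : ZMod N) = ((r * m : ℕ) : ZMod N) + (r : ZMod N) := by
      push_cast; ring
    rw [hc, ← add_assoc, h, ih]

open Finset in
lemma geom_sum_orderOf {K : Type*} [Field K] (ζ : K) (N : ℕ)
    (hord : orderOf ζ = N) (m : ℕ) :
    ∑ a ∈ range N, ζ ^ (a * m) = if N ∣ m then (N : K) else 0 := by
  have hζN : ζ ^ N = 1 := by rw [← hord]; exact pow_orderOf_eq_one ζ
  simp_rw [mul_comm, pow_mul]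
  by_cases h : N ∣ m
  · rw [if_pos h]
    have h1 : ζ ^ m = 1 := by
      rw [← orderOf_dvd_iff_pow_eq_one, hord]; exact h
    simp [h1]
  · rw [if_neg h]
    have hne : ζ ^ m ≠ 1 := by
      rw [Ne, ← orderOf_dvd_iff_pow_eq_one, hord]; exact h
    rw [geom_sum_eq hne, ← pow_mul, mul_comm m N, pow_mul, hζN, one_pow, sub_self, zero_div]

theorem leastPeriod_not_dvd_of_degree_n_in_support
    {F K : Type*} [Field F] [Fintype F] [Field K] [Fintype K] [Algebra F K]
    (n : ℕ) (hn : 2 ≤ n) (hcard : Fintype.card K = Fintype.card F ^ n)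
    (ζ : K) (hζ : orderOf ζ = Fintype.card K - 1)
    (Fn : K → K)
    (hsupp : ∃ ξ : K, Fn ξ ≠ 0 ∧ (minpoly F ξ).natDegree = n) :
    ∀ d : ℕ, 0 < d → d ∣ n → d < n →
      ¬ (leastPeriod (dft (Fintype.card K - 1) ζ (fun k => Fn (ζ ^ k.val))) ∣
          Fintype.card F ^ d - 1) := by
  classical
  obtain ⟨ξ, hξ0, hξdeg⟩ := hsupp
  intro d hd0 hdn hdlt hdvd
  set q := Fintype.card F with hq
  have hq2 : 2 ≤ q := Fintype.one_lt_card
  set N := Fintype.card K - 1 with hNdef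
  have hcardK : 1 < Fintype.card K := Fintype.one_lt_card
  have hN0 : 0 < N := by omega
  haveI : NeZero N := ⟨hN0.ne'⟩
  set R := q ^ d - 1 with hRdef
  have hqd1 : 1 ≤ q ^ d := Nat.one_le_pow _ _ (by omega)
  -- ζ basics
  have hζpow : ζ ^ N = 1 := by rw [← hζ]; exact pow_orderOf_eq_one ζ
  have hζne : ζ ≠ 0 := by
    intro h
    exact one_ne_zero (α := K) (by rw [← hζpow, h, zero_pow hN0.ne'])
  -- least period gives R-periodicity
  set g := dft N ζ (fun k => Fn (ζ ^ k.val)) with hg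
  have hmem : leastPeriod g ∈ {r : ℕ | 0 < r ∧ IsPeriodicZMod g r} := by
    apply Nat.sInf_mem
    exact ⟨N, hN0, fun i => by simp⟩
  obtain ⟨hr0, hrper⟩ := hmem
  obtain ⟨m, hm⟩ := hdvd
  have hper : IsPeriodicZMod g R := by rw [hm]; exact hrper.mul_nat m
  -- key vanishing identity
  have hf : ∀ j : ℕ, Fn (ζ ^ ((j : ZMod N)).val) = Fn (ζ ^ j) := by
    intro j
    rw [ZMod.val_natCast, ← hζ, pow_mod_orderOf]
  have hkey : ∀ i : ZMod N,
      ∑ j ∈ Finset.range N, Fn (ζ ^ j) * (ζ ^ (R * j) - 1) * ζ ^ (i.val * j) = 0 := by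
    intro i
    have h1 : g (i + (R : ZMod N)) = g i := hper i
    have hval : (i + (R : ZMod N)).val ≡ i.val + R [MOD N] := by
      rw [← ZMod.natCast_eq_natCast_iff]
      push_cast
      simp [ZMod.natCast_val, ZMod.cast_id]
    have h2 : ∀ j : ℕ, ζ ^ ((i + (R : ZMod N)).val * j) = ζ ^ (R * j) * ζ ^ (i.val * j) := by
      intro j
      have hmod : ((i + (R : ZMod N)).val * j) % N = ((i.val + R) * j) % N :=
        hval.mul_right j
      have e : ζ ^ ((i + (R : ZMod N)).val * j) = ζ ^ ((i.val + R) * j) := by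
        have e1 := pow_mod_orderOf ζ ((i + (R : ZMod N)).val * j)
        have e2 := pow_mod_orderOf ζ ((i.val + R) * j)
        rw [hζ] at e1 e2
        rw [← e1, ← e2, hmod]
      rw [e, add_mul, pow_add]
      ring
    calc ∑ j ∈ Finset.range N, Fn (ζ ^ j) * (ζ ^ (R * j) - 1) * ζ ^ (i.val * j)
        = g (i + (R : ZMod N)) - g i := by
          rw [hg]
          simp only [dft]
          rw [← Finset.sum_sub_distrib]
          refine Finset.sum_congr rfl fun j _ => ?_
          rw [hf j, h2 j]
          ring
      _ = 0 := by rw [h1, sub_self]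
  -- ξ is a power of ζ
  have hξne : ξ ≠ 0 := by
    intro h
    rw [h, minpoly.zero, Polynomial.natDegree_X] at hξdeg
    omega
  obtain ⟨k, hk⟩ : ∃ k : ℕ, ζ ^ k = ξ := by
    have htop : Subgroup.zpowers (Units.mk0 ζ hζne) = ⊤ := by
      apply Subgroup.eq_top_of_card_eq
      rw [Nat.card_zpowers, ← orderOf_units, Units.val_mk0, hζ, Nat.card_eq_fintype_card,
        Fintype.card_units]
    have : Units.mk0 ξ hξne ∈ Subgroup.zpowers (Units.mk0 ζ hζne) := by
      rw [htop]; trivial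
    obtain ⟨k, hk⟩ := mem_powers_iff_mem_zpowers.mpr this
    exact ⟨k, by simpa using congrArg Units.val hk⟩
  set k' := k % N with hk'def
  have hk'N : k' < N := Nat.mod_lt _ hN0
  have hζk' : ζ ^ k' = ξ := by
    have h := pow_mod_orderOf ζ k
    rw [hζ, hk] at h
    exact h
  -- the inverse-transform computation at k'
  have hiff : ∀ j < N, (N ∣ j + (N - k') ↔ j = k') := by
    intro j hj
    constructor
    · rintro ⟨c, hc⟩
      have hlt : N * c < N * 2 := by omega
      have hc2 : c < 2 := Nat.lt_of_mul_lt_mul_left hlt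
      have hc0 : c ≠ 0 := by rintro rfl; omega
      have : c = 1 := by omega
      rw [this, mul_one] at hc
      omega
    · rintro rfl
      have : k' + (N - k') = N := by omega
      rw [this]
  have hNK : (N : K) = -1 := by
    have hz : ((Fintype.card K : ℕ) : K) = 0 := Nat.cast_card_eq_zero K
    rw [hNdef, Nat.cast_sub (by omega : 1 ≤ Fintype.card K), hz, Nat.cast_one, zero_sub]
  have hT : Fn (ζ ^ k') * (ζ ^ (R * k') - 1) * (N : K) = 0 := by
    have h0 : ∑ a ∈ Finset.range N,
        (∑ j ∈ Finset.range N, Fn (ζ ^ j) * (ζ ^ (R * j) - 1) * ζ ^ (a * j))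
          * ζ ^ (a * (N - k')) = 0 := by
      apply Finset.sum_eq_zero
      intro a ha
      have h := hkey (a : ZMod N)
      rw [ZMod.val_natCast_of_lt (Finset.mem_range.mp ha)] at h
      rw [h, zero_mul]
    have e1 : ∑ a ∈ Finset.range N,
        (∑ j ∈ Finset.range N, Fn (ζ ^ j) * (ζ ^ (R * j) - 1) * ζ ^ (a * j))
          * ζ ^ (a * (N - k'))
        = ∑ j ∈ Finset.range N, Fn (ζ ^ j) * (ζ ^ (R * j) - 1)
            * ∑ a ∈ Finset.range N, ζ ^ (a * (j + (N - k'))) := by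
      simp_rw [Finset.sum_mul]
      rw [Finset.sum_comm]
      refine Finset.sum_congr rfl fun j _ => ?_
      rw [Finset.mul_sum]
      refine Finset.sum_congr rfl fun a _ => ?_
      rw [mul_assoc, ← pow_add, ← Nat.mul_add]
    have e2 : ∑ j ∈ Finset.range N, Fn (ζ ^ j) * (ζ ^ (R * j) - 1)
            * ∑ a ∈ Finset.range N, ζ ^ (a * (j + (N - k')))
        = Fn (ζ ^ k') * (ζ ^ (R * k') - 1) * (N : K) := by
      have : ∀ j ∈ Finset.range N,
          Fn (ζ ^ j) * (ζ ^ (R * j) - 1) * ∑ a ∈ Finset.range N, ζ ^ (a * (j + (N - k')))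
          = if j = k' then Fn (ζ ^ j) * (ζ ^ (R * j) - 1) * (N : K) else 0 := by
        intro j hj
        rw [geom_sum_orderOf ζ N hζ]
        by_cases hjk : j = k'
        · rw [if_pos ((hiff j (Finset.mem_range.mp hj)).mpr hjk), if_pos hjk]
        · rw [if_neg (fun h => hjk ((hiff j (Finset.mem_range.mp hj)).mp h)), if_neg hjk,
            mul_zero]
      rw [Finset.sum_congr rfl this, Finset.sum_ite_eq' (Finset.range N) k',
        if_pos (Finset.mem_range.mpr hk'N)]
    rw [← e2, ← e1, h0]
  -- conclude ζ^(R k') = 1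
  have hζRk : ζ ^ (R * k') = 1 := by
    rw [hNK, mul_neg_one, neg_eq_zero, mul_eq_zero] at hT
    rcases hT with h | h
    · rw [hζk'] at h; exact absurd h hξ0
    · exact sub_eq_zero.mp h
  have hξfix : ξ ^ (q ^ d) = ξ := by
    have : q ^ d = R + 1 := by omega
    rw [← hζk', this, ← pow_mul, Nat.mul_add, Nat.mul_one, pow_add, mul_comm k' R, hζRk, one_mul]
  -- final contradiction via subfield counting
  have hint : IsIntegral F ξ := by
    by_contra h
    rw [minpoly.eq_zero h, Polynomial.natDegree_zero] at hξdeg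
    omega
  -- the characteristic
  set p := ringChar F with hpdef
  haveI : CharP F p := ringChar.charP F
  haveI hpp : Fact p.Prime := ⟨CharP.char_is_prime F p⟩
  haveI : CharP K p := charP_of_injective_algebraMap (algebraMap F K).injective p
  obtain ⟨e, -, hqe⟩ := FiniteField.card F p
  haveI : ExpChar K p := ExpChar.prime hpp.out
  have hiterdef : ∀ x : K, iterateFrobenius K p ((e : ℕ) * d) x = x ^ q ^ d := by
    intro x
    rw [iterateFrobenius_def, pow_mul, ← hqe]
  let φ : K →ₐ[F] K :=
    { toRingHom := iterateFrobenius K p ((e : ℕ) * d),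
      commutes' := by
        intro r
        show iterateFrobenius K p ((e : ℕ) * d) (algebraMap F K r) = algebraMap F K r
        rw [hiterdef, ← map_pow, FiniteField.pow_card_pow] }
  have hφle : Algebra.adjoin F {ξ} ≤ AlgHom.equalizer φ (AlgHom.id F K) := by
    rw [Algebra.adjoin_le_iff]
    intro y hy
    have hyx : y = ξ := hy
    rw [SetLike.mem_coe, AlgHom.mem_equalizer]
    show iterateFrobenius K p ((e : ℕ) * d) y = y
    rw [hiterdef, hyx, hξfix]
  set E := IntermediateField.adjoin F {ξ} with hEdef
  have hEfix : ∀ x : K, x ∈ E → x ^ q ^ d = x := by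
    intro x hx
    have hx' : x ∈ Algebra.adjoin F {ξ} := by
      rw [← IntermediateField.adjoin_simple_toSubalgebra_of_isAlgebraic hint.isAlgebraic]
      exact hx
    have h1 := hφle hx'
    rw [AlgHom.mem_equalizer] at h1
    have h2 : iterateFrobenius K p ((e : ℕ) * d) x = x := h1
    rwa [hiterdef] at h2
  have hfinrank : Module.finrank F E = n := by
    rw [hEdef, IntermediateField.adjoin.finrank hint, hξdeg]
  haveI : Fintype E := Fintype.ofFinite _
  have hcardE : Fintype.card E = q ^ n := by
    rw [Module.card_eq_pow_finrank (K := F) (V := E), hfinrank]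
  -- bound by roots of X^(q^d) - X
  have hcardle : Fintype.card E ≤ q ^ d := by
    set P : Polynomial K := Polynomial.X ^ q ^ d - Polynomial.X with hP
    have hPne : P ≠ 0 :=
      FiniteField.X_pow_card_pow_sub_X_ne_zero K (by omega) (by omega)
    have hinj : ∀ x : E, (x : K) ∈ P.roots.toFinset := by
      intro x
      rw [Multiset.mem_toFinset, Polynomial.mem_roots hPne]
      simp only [hP, Polynomial.IsRoot, Polynomial.eval_sub, Polynomial.eval_pow,
        Polynomial.eval_X]
      rw [hEfix x x.2, sub_self]
    calc Fintype.card E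
        = (Finset.univ : Finset E).card := rfl
      _ ≤ P.roots.toFinset.card := by
          apply Finset.card_le_card_of_injOn (fun x : E => (x : K))
          · intro x _; exact hinj x
          · intro x _ y _ h; exact Subtype.ext h
      _ ≤ Multiset.card P.roots := Multiset.toFinset_card_le _
      _ ≤ P.natDegree := P.card_roots'
      _ = q ^ d := by
          rw [hP, FiniteField.X_pow_card_pow_sub_X_natDegree_eq K (by omega : d ≠ 0)
            (by omega : 1 < q)]
  rw [hcardE] at hcardle
  have : q ^ d < q ^ n := Nat.pow_lt_pow_right (by omega) hdlt
  omega
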